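/- If a constraint c is a support constraint of the random convex program P[C] with constraints convex in the parameter δ, then the parameter δ^(c) is an extreme point of the convex hull of the sampled parameters: Sc(C) ⊆ vert(C). -/

import Mathlib

open Set

lemma extremePoint_of_not_mem_convexHull_diff {l : ℕ} {s : Set (Fin l → ℝ)}
    {x : Fin l → ℝ} (hxs : x ∈ s) (h : x ∉ convexHull ℝ (s \ {x})) :
    x ∈ Set.extremePoints ℝ (convexHull ℝ s) := by
  by_cases hu : (s \ {x}).Nonempty
  · rw [mem_extremePoints_iff_forall_segment]
    refine ⟨subset_convexHull ℝ s hxs, ?_⟩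
    intro x₁ hx₁ x₂ hx₂ hseg
    have hins : s = insert x (s \ {x}) := by
      ext y; by_cases hy : y = x <;> simp [hy, hxs]
    rw [hins, convexHull_insert hu, mem_convexJoin] at hx₁ hx₂
    obtain ⟨x', hx', y₁, hy₁, hseg₁⟩ := hx₁
    obtain ⟨x'', hx'', y₂, hy₂, hseg₂⟩ := hx₂
    rw [mem_singleton_iff] at hx' hx''
    obtain ⟨a₁, b₁, ha₁, hb₁, hab₁, h1⟩ := hseg₁
    obtain ⟨a₂, b₂, ha₂, hb₂, hab₂, h2⟩ := hseg₂
    rw [hx'] at h1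
    rw [hx''] at h2
    obtain ⟨p, q, hp, hq, hpq, h3⟩ := hseg
    set T := p * b₁ + q * b₂ with hT
    have key : T • x = (p * b₁) • y₁ + (q * b₂) • y₂ := by
      funext i
      have e1 := congrFun h1 i
      have e2 := congrFun h2 i
      have e3 := congrFun h3 i
      simp only [Pi.add_apply, Pi.smul_apply, smul_eq_mul] at e1 e2 e3 ⊢
      have ha₁' : a₁ = 1 - b₁ := by linarith
      have ha₂' : a₂ = 1 - b₂ := by linarith
      rw [ha₁'] at e1; rw [ha₂'] at e2
      linear_combination (-p) * e1 + (-q) * e2 - e3 + x i * hpq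
    rcases eq_or_ne T 0 with hT0 | hT0
    · have hpb₁ : p * b₁ = 0 := by nlinarith [mul_nonneg hp hb₁, mul_nonneg hq hb₂]
      have hpb₂ : q * b₂ = 0 := by nlinarith [mul_nonneg hp hb₁, mul_nonneg hq hb₂]
      rcases eq_or_ne b₁ 0 with hb10 | hb1ne
      · left
        rw [← h1, hb10]
        have : a₁ = 1 := by linarith
        simp [this]
      · have hp0 : p = 0 := by
          rcases mul_eq_zero.1 hpb₁ with h' | h'
          · exact h'
          · exact absurd h' hb1ne
        have hq1 : q = 1 := by linarith
        have hb20 : b₂ = 0 := by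
          rcases mul_eq_zero.1 hpb₂ with h' | h'
          · exact absurd h' (by rw [hq1]; norm_num)
          · exact h'
        right
        rw [← h2, hb20]
        have : a₂ = 1 := by linarith
        simp [this]
    · exfalso
      have hTnn : 0 ≤ T := by positivity
      have hxmem : x ∈ convexHull ℝ (s \ {x}) := by
        have hx_eq : x = (T⁻¹ * (p * b₁)) • y₁ + (T⁻¹ * (q * b₂)) • y₂ := by
          have := congrArg (fun v => T⁻¹ • v) key
          simp only [smul_smul, inv_mul_cancel₀ hT0, one_smul, smul_add] at this
          rw [this]
        have hmem := (convex_convexHull ℝ (s \ {x})) hy₁ hy₂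
          (mul_nonneg (by positivity) (by positivity))
          (mul_nonneg (by positivity) (by positivity))
          (by field_simp; rw [hT] : T⁻¹ * (p * b₁) + T⁻¹ * (q * b₂) = 1)
        rwa [← hx_eq] at hmem
      exact h hxmem
  · have hs : s = {x} := by
      apply Subset.antisymm
      · intro y hy
        by_contra hyx
        exact hu ⟨y, hy, hyx⟩
      · exact singleton_subset_iff.2 hxs
    rw [hs, convexHull_singleton, extremePoints_singleton]
    exact mem_singleton _


def SatP {ι : Type*} {d l : ℕ} (X : Set (Fin d → ℝ))
    (f : (Fin d → ℝ) → (Fin l → ℝ) → ℝ) (δ : ι → Fin l → ℝ)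
    (S : Set ι) : Set (Fin d → ℝ) :=
  {x ∈ X | ∀ j ∈ S, f x (δ j) ≤ 0}

noncomputable def JstarP {ι : Type*} {d l : ℕ} (X : Set (Fin d → ℝ))
    (a : Fin d → ℝ) (f : (Fin d → ℝ) → (Fin l → ℝ) → ℝ) (δ : ι → Fin l → ℝ)
    (S : Set ι) : EReal :=
  sInf ((fun x => ((∑ i, a i * x i : ℝ) : EReal)) '' SatP X f δ S)

/-- `Sc(C) ⊆ vert(C)`: the parameter of a support constraint of an RCP with
constraints convex in the parameter is an extreme point of the convex hull of
the sampled parameters. -/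
theorem support_subset_vertices {ι : Type*} {d l : ℕ} (X : Set (Fin d → ℝ))
    (a : Fin d → ℝ) (f : (Fin d → ℝ) → (Fin l → ℝ) → ℝ) (δ : ι → Fin l → ℝ)
    (Δ : Set (Fin l → ℝ)) (C : Set ι) (c : ι)
    (hCfin : C.Finite) (hXcp : IsCompact X) (hXcv : Convex ℝ X)
    (hΔ : Convex ℝ Δ) (hδ : ∀ j ∈ C, δ j ∈ Δ)
    (hconv : ∀ x ∈ X, ConvexOn ℝ Δ (f x)) (hc : c ∈ C)
    (hsupp : JstarP X a f δ (C \ {c}) < JstarP X a f δ C) :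
    δ c ∈ Set.extremePoints ℝ (convexHull ℝ (δ '' C)) := by
  by_contra hne
  have hx_in : δ c ∈ δ '' C := ⟨c, hc, rfl⟩
  have hch : δ c ∈ convexHull ℝ ((δ '' C) \ {δ c}) := by
    by_contra h'
    exact hne (extremePoint_of_not_mem_convexHull_diff hx_in h')
  have hsub : (δ '' C) \ {δ c} ⊆ δ '' (C \ {c}) := by
    rintro y ⟨⟨j, hj, rfl⟩, hy⟩
    exact ⟨j, ⟨hj, fun hjc => hy (by rw [Set.mem_singleton_iff] at hjc ⊢; rw [hjc])⟩, rfl⟩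
  have hch' : δ c ∈ convexHull ℝ (δ '' (C \ {c})) := convexHull_mono hsub hch
  have hsΔ : δ '' (C \ {c}) ⊆ Δ := by
    rintro y ⟨j, hj, rfl⟩
    exact hδ j hj.1
  have hsat : SatP X f δ (C \ {c}) ⊆ SatP X f δ C := by
    rintro x ⟨hxX, hxf⟩
    refine ⟨hxX, fun j hj => ?_⟩
    by_cases hjc : j = c
    · subst hjc
      obtain ⟨y, ⟨j', hj', rfl⟩, hle⟩ :=
        (hconv x hxX).exists_ge_of_mem_convexHull hsΔ hch'
      exact hle.trans (hxf j' hj')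
    · exact hxf j ⟨hj, hjc⟩
  have heq : SatP X f δ (C \ {c}) = SatP X f δ C := by
    refine Subset.antisymm hsat ?_
    rintro x ⟨hxX, hxf⟩
    exact ⟨hxX, fun j hj => hxf j hj.1⟩
  rw [JstarP, JstarP, heq] at hsupp
  exact lt_irrefl _ hsupp
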